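/- For the Curie-Weiss model with 0 ≤ β < 1, log Z_N(β) = N log 2 + G_N(β), where G_N(β) increases monotonically to Σ_{k≥2} β^k/(2k) = -β/2 - log√(1-β) as N → ∞. -/

import Mathlib

open Finset Filter Topology

/-- The spin value associated to a Boolean configuration entry. -/
noncomputable def spin (b : Bool) : ℝ := if b then 1 else -1

/-- The Curie-Weiss Hamiltonian `H_N(σ) = -(1/N) Σ_{1≤i<j≤N} σ_i σ_j`. -/
noncomputable def cwH (N : ℕ) (σ : Fin N → Bool) : ℝ :=
  -(1 / (N : ℝ)) * ∑ i, ∑ j ∈ Finset.Ioi i, spin (σ i) * spin (σ j)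

/-- The Curie-Weiss partition function `Z_N(β) = Σ_σ exp(-β H_N(σ))`. -/
noncomputable def cwZ (N : ℕ) (β : ℝ) : ℝ :=
  ∑ σ : Fin N → Bool, Real.exp (-β * cwH N σ)

/-- `G_N(β) := log Z_N(β) - N log 2`. -/
noncomputable def cwG (N : ℕ) (β : ℝ) : ℝ := Real.log (cwZ N β) - N * Real.log 2

namespace CWaux

open Real MeasureTheory

lemma spin_mul_self (b : Bool) : spin b * spin b = 1 := by cases b <;> simp [spin]

lemma sum_pairs {N : ℕ} (s : Fin N → ℝ) (hs : ∀ i, s i * s i = 1) :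
    2 * ∑ i, ∑ j ∈ Finset.Ioi i, s i * s j = (∑ i, s i) ^ 2 - N := by
  have key := Finset.sum_sum_Ioi_add_eq_sum_sum_off_diag (fun i j => s i * s j)
  have h1 : ∀ i : Fin N, ∑ j ∈ ({i}ᶜ : Finset (Fin N)), s j * s i
      = (∑ j, s j) * s i - 1 := by
    intro i
    have h2 := Finset.sum_compl_add_sum ({i} : Finset (Fin N)) (fun j => s j * s i)
    rw [Finset.sum_singleton] at h2
    have h3 : ∑ j, s j * s i = (∑ j, s j) * s i := by rw [Finset.sum_mul]
    rw [h3, hs i] at h2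
    linarith
  calc 2 * ∑ i, ∑ j ∈ Finset.Ioi i, s i * s j
      = ∑ i, ∑ j ∈ Finset.Ioi i, (s j * s i + s i * s j) := by
        rw [two_mul, ← Finset.sum_add_distrib]
        congr 1; ext i
        rw [← Finset.sum_add_distrib]
        congr 1; ext j; ring
    _ = ∑ i, ∑ j ∈ ({i}ᶜ : Finset (Fin N)), s j * s i := by
        convert key using 3
    _ = ∑ i, ((∑ j, s j) * s i - 1) := by simp_rw [h1]
    _ = (∑ i, s i) ^ 2 - N := by
        rw [Finset.sum_sub_distrib, ← Finset.mul_sum, Finset.sum_const, Finset.card_univ]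
        simp [sq]

lemma sum_exp_spin (N : ℕ) (t : ℝ) :
    ∑ σ : Fin N → Bool, Real.exp (t * ∑ i, spin (σ i)) = (2 * Real.cosh t) ^ N := by
  have h1 : ∀ σ : Fin N → Bool, Real.exp (t * ∑ i, spin (σ i))
      = ∏ i, Real.exp (t * spin (σ i)) := by
    intro σ
    rw [Finset.mul_sum, Real.exp_sum]
  simp_rw [h1]
  rw [← Fintype.prod_sum (fun (_ : Fin N) (b : Bool) => Real.exp (t * spin b))]
  rw [Finset.prod_const, Finset.card_univ, Fintype.card_fin]
  congr 1
  rw [Fintype.sum_bool]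
  simp [spin, Real.cosh_eq]
  ring

lemma integrable_gauss_lin (c : ℝ) :
    Integrable (fun x : ℝ => Real.exp (c * x - x ^ 2 / 2)) := by
  have h : ∀ x : ℝ, Real.exp (c * x - x ^ 2 / 2)
      = Real.exp (c ^ 2 / 2) * Real.exp (-(1/2 : ℝ) * (x - c) ^ 2) := by
    intro x
    rw [← Real.exp_add]; ring_nf
  simp_rw [h]
  exact ((integrable_exp_neg_mul_sq (by norm_num : (0:ℝ) < 1/2)).comp_sub_right c).const_mul _

lemma integral_gauss_lin (c : ℝ) :
    ∫ x : ℝ, Real.exp (c * x - x ^ 2 / 2) = Real.sqrt (2 * π) * Real.exp (c ^ 2 / 2) := by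
  have h : ∀ x : ℝ, Real.exp (c * x - x ^ 2 / 2)
      = Real.exp (c ^ 2 / 2) * Real.exp (-(1/2 : ℝ) * (x - c) ^ 2) := by
    intro x
    rw [← Real.exp_add]; ring_nf
  simp_rw [h]
  rw [integral_const_mul]
  rw [MeasureTheory.integral_sub_right_eq_self (fun x : ℝ => Real.exp (-(1/2 : ℝ) * x ^ 2)) c]
  rw [integral_gaussian]
  rw [mul_comm]
  norm_num
  ring

lemma cwZ_eq (β : ℝ) {N : ℕ} (hN : 1 ≤ N) :
    cwZ N β = ∑ σ : Fin N → Bool,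
      Real.exp (β / (2 * N) * (∑ i, spin (σ i)) ^ 2 - β / 2) := by
  unfold cwZ
  congr 1; ext σ
  congr 1
  have hNpos : (0:ℝ) < N := by exact_mod_cast hN
  have hp := sum_pairs (fun i => spin (σ i)) (fun i => spin_mul_self (σ i))
  have hP : (∑ i, ∑ j ∈ Finset.Ioi i, spin (σ i) * spin (σ j))
      = ((∑ i, spin (σ i)) ^ 2 - N) / 2 := by
    linarith
  unfold cwH
  rw [hP]
  field_simp

lemma sum_exp_sq (β : ℝ) (hβ : 0 ≤ β) {N : ℕ} (hN : 1 ≤ N) :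
    ∑ σ : Fin N → Bool, Real.exp (β / (2 * N) * (∑ i, spin (σ i)) ^ 2)
      = (Real.sqrt (2 * π))⁻¹ *
        ∫ x : ℝ, Real.exp (-x ^ 2 / 2) * (2 * Real.cosh (Real.sqrt (β / N) * x)) ^ N := by
  have hβN : (0:ℝ) ≤ β / N := div_nonneg hβ (Nat.cast_nonneg N)
  have hsq : Real.sqrt (β / N) ^ 2 = β / N := Real.sq_sqrt hβN
  have hσ : ∀ σ : Fin N → Bool, Real.exp (β / (2 * N) * (∑ i, spin (σ i)) ^ 2)
      = (Real.sqrt (2 * π))⁻¹ *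
        ∫ x : ℝ, Real.exp ((Real.sqrt (β / N) * (∑ i, spin (σ i))) * x - x ^ 2 / 2) := by
    intro σ
    rw [integral_gauss_lin]
    rw [← mul_assoc, inv_mul_cancel₀ (by positivity : Real.sqrt (2 * π) ≠ 0), one_mul]
    congr 1
    rw [mul_pow, hsq]
    ring
  simp_rw [hσ]
  rw [← Finset.mul_sum]
  congr 1
  rw [← MeasureTheory.integral_finset_sum _ (fun σ _ => integrable_gauss_lin _)]
  congr 1; ext x
  have : ∀ σ : Fin N → Bool,
      Real.exp ((Real.sqrt (β / N) * (∑ i, spin (σ i))) * x - x ^ 2 / 2)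
      = Real.exp (-x ^ 2 / 2) * Real.exp ((Real.sqrt (β / N) * x) * ∑ i, spin (σ i)) := by
    intro σ
    rw [← Real.exp_add]; ring_nf
  simp_rw [this]
  rw [← Finset.mul_sum, sum_exp_spin]

lemma hasDerivAt_aux (x : ℝ) :
    HasDerivAt (fun t => 2 * Real.log (Real.cosh t) - t * Real.sinh t / Real.cosh t)
      ((Real.sinh x * Real.cosh x - x) / Real.cosh x ^ 2) x := by
  have hc : ∀ y : ℝ, Real.cosh y ≠ 0 := fun y => (Real.cosh_pos y).ne'
  have d1 : HasDerivAt (fun t => Real.log (Real.cosh t)) (Real.sinh x / Real.cosh x) x := by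
    simpa using (Real.hasDerivAt_cosh x).log (hc x)
  have d2 : HasDerivAt (fun t : ℝ => t * Real.sinh t)
      (1 * Real.sinh x + x * Real.cosh x) x :=
    (hasDerivAt_id x).mul (Real.hasDerivAt_sinh x)
  have d3 := d2.div (Real.hasDerivAt_cosh x) (hc x)
  have d4 := (d1.const_mul 2).sub d3
  refine d4.congr_deriv (Eq.symm ?_)
  have h1 := Real.cosh_sq_sub_sinh_sq x
  field_simp
  linear_combination x * h1

lemma key_ineq {t : ℝ} (ht : 0 ≤ t) :
    t * Real.sinh t / Real.cosh t ≤ 2 * Real.log (Real.cosh t) := by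
  set h : ℝ → ℝ := fun t => 2 * Real.log (Real.cosh t) - t * Real.sinh t / Real.cosh t with hh
  have hc : ∀ y : ℝ, (0:ℝ) < Real.cosh y := Real.cosh_pos
  have hmono : MonotoneOn h (Set.Ici 0) := by
    apply monotoneOn_of_deriv_nonneg (convex_Ici 0)
    · exact fun x _ => ((hasDerivAt_aux x).continuousAt).continuousWithinAt
    · exact fun x _ => (hasDerivAt_aux x).differentiableAt.differentiableWithinAt
    · intro x hx
      rw [interior_Ici] at hx
      rw [(hasDerivAt_aux x).deriv]
      have hx0 : (0:ℝ) < x := hx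
      have h1 : x ≤ Real.sinh x := Real.self_le_sinh_iff.mpr hx0.le
      have h2 : Real.sinh x ≤ Real.sinh x * Real.cosh x := by
        nlinarith [Real.one_le_cosh x, Real.sinh_pos_iff.mpr hx0]
      apply div_nonneg
      · nlinarith
      · positivity
  have h0 : h 0 = 0 := by simp [hh]
  have := hmono (Set.self_mem_Ici) (Set.mem_Ici.mpr ht) ht
  rw [h0] at this
  simp only [hh] at this
  linarith

lemma logcosh_sq_antitone : AntitoneOn (fun t => Real.log (Real.cosh t) / t ^ 2) (Set.Ioi 0) := by
  have hder : ∀ x : ℝ, x ≠ 0 → HasDerivAt (fun t => Real.log (Real.cosh t) / t ^ 2)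
      ((Real.sinh x / Real.cosh x * x ^ 2 - Real.log (Real.cosh x) * (2 * x)) / (x ^ 2) ^ 2) x := by
    intro x hx
    have d1 : HasDerivAt (fun t => Real.log (Real.cosh t)) (Real.sinh x / Real.cosh x) x := by
      simpa using (Real.hasDerivAt_cosh x).log (Real.cosh_pos x).ne'
    have d2 : HasDerivAt (fun t : ℝ => t ^ 2) ((2:ℕ) * x ^ 1) x := hasDerivAt_pow 2 x
    have := d1.div d2 (pow_ne_zero 2 hx)
    refine this.congr_deriv (Eq.symm ?_)
    push_cast
    ring
  apply antitoneOn_of_deriv_nonpos (convex_Ioi 0)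
  · apply ContinuousOn.div
    · exact (Real.continuous_cosh.log fun x => (Real.cosh_pos x).ne').continuousOn
    · exact (continuous_pow 2).continuousOn
    · intro x hx; exact pow_ne_zero 2 (ne_of_gt hx)
  · intro x hx
    rw [interior_Ioi] at hx
    exact (hder x (ne_of_gt hx)).differentiableAt.differentiableWithinAt
  · intro x hx
    rw [interior_Ioi] at hx
    have hx0 : (0:ℝ) < x := hx
    rw [(hder x hx0.ne').deriv]
    apply div_nonpos_of_nonpos_of_nonneg
    · have hk := key_ineq hx0.le
      have : Real.sinh x / Real.cosh x * x ^ 2 = x * (x * Real.sinh x / Real.cosh x) := by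
        field_simp
      rw [this]
      nlinarith
    · positivity

lemma mono_step {c : ℝ} (hc : 0 < c) (m : ℕ) (hm : 1 ≤ m) :
    (m : ℝ) * Real.log (Real.cosh (c / Real.sqrt m)) ≤
      ((m : ℝ) + 1) * Real.log (Real.cosh (c / Real.sqrt ((m : ℝ) + 1))) := by
  have hm0 : (0:ℝ) < m := by exact_mod_cast hm
  have hm1 : (0:ℝ) < (m:ℝ) + 1 := by linarith
  set u := c / Real.sqrt ((m:ℝ) + 1) with hu
  set v := c / Real.sqrt m with hv
  have hupos : 0 < u := div_pos hc (Real.sqrt_pos.mpr hm1)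
  have hvpos : 0 < v := div_pos hc (Real.sqrt_pos.mpr hm0)
  have huv : u ≤ v := by
    apply div_le_div_of_nonneg_left hc.le (Real.sqrt_pos.mpr hm0)
    exact Real.sqrt_le_sqrt (by linarith)
  have hφ := logcosh_sq_antitone (Set.mem_Ioi.mpr hupos) (Set.mem_Ioi.mpr hvpos) huv
  have hu2 : u ^ 2 = c ^ 2 / ((m:ℝ) + 1) := by
    rw [hu, div_pow, Real.sq_sqrt hm1.le]
  have hv2 : v ^ 2 = c ^ 2 / (m:ℝ) := by
    rw [hv, div_pow, Real.sq_sqrt hm0.le]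
  have hc2 : (0:ℝ) < c ^ 2 := by positivity
  have h1 : (m : ℝ) * Real.log (Real.cosh v) = c ^ 2 * (Real.log (Real.cosh v) / v ^ 2) := by
    rw [hv2]; field_simp
  have h2 : ((m : ℝ) + 1) * Real.log (Real.cosh u) = c ^ 2 * (Real.log (Real.cosh u) / u ^ 2) := by
    rw [hu2]; field_simp
  rw [h1, h2]
  exact mul_le_mul_of_nonneg_left hφ hc2.le

lemma one_add_half_sq_le_cosh (t : ℝ) : 1 + t ^ 2 / 2 ≤ Real.cosh t := by
  have key : ∀ s : ℝ, 0 ≤ s → 1 + s ^ 2 / 2 ≤ Real.cosh s := by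
    intro s hs
    have hder : ∀ x : ℝ, HasDerivAt (fun t => Real.cosh t - 1 - t ^ 2 / 2)
        (Real.sinh x - x) x := by
      intro x
      have d2 : HasDerivAt (fun t : ℝ => t ^ 2 / 2) ((2:ℕ) * x ^ 1 / 2) x :=
        (hasDerivAt_pow 2 x).div_const 2
      have := ((Real.hasDerivAt_cosh x).sub_const 1).sub d2
      refine this.congr_deriv (Eq.symm ?_)
      push_cast; ring
    have hmono : MonotoneOn (fun t => Real.cosh t - 1 - t ^ 2 / 2) (Set.Ici 0) := by
      apply monotoneOn_of_deriv_nonneg (convex_Ici 0)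
      · exact fun x _ => (hder x).continuousAt.continuousWithinAt
      · exact fun x _ => (hder x).differentiableAt.differentiableWithinAt
      · intro x hx
        rw [interior_Ici] at hx
        rw [(hder x).deriv]
        have := Real.self_le_sinh_iff.mpr (le_of_lt hx)
        linarith
    have := hmono Set.self_mem_Ici (Set.mem_Ici.mpr hs) hs
    simp only [Real.cosh_zero] at this
    norm_num at this
    linarith
  rcases le_total 0 t with h | h
  · exact key t h
  · have := key (-t) (by linarith)
    simpa using this

lemma log_cosh_le (t : ℝ) : Real.log (Real.cosh t) ≤ t ^ 2 / 2 := by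
  rw [Real.log_le_iff_le_exp (Real.cosh_pos t)]
  exact Real.cosh_le_exp_half_sq t

lemma le_log_cosh (t : ℝ) : t ^ 2 / 2 - (t ^ 2 / 2) ^ 2 ≤ Real.log (Real.cosh t) := by
  set s := t ^ 2 / 2 with hs
  have hs0 : 0 ≤ s := by positivity
  have hs1 : (0:ℝ) < 1 + s := by linarith
  have l1 : Real.log (1 + s) ≤ Real.log (Real.cosh t) :=
    Real.log_le_log hs1 (by
      have := one_add_half_sq_le_cosh t
      linarith)
  have l2 : s / (1 + s) ≤ Real.log (1 + s) := by
    have h := Real.log_le_sub_one_of_pos (show (0:ℝ) < (1 + s)⁻¹ by positivity)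
    rw [Real.log_inv] at h
    have he : (1 + s)⁻¹ - 1 = -(s / (1 + s)) := by field_simp; ring
    rw [he] at h
    linarith
  have l3 : s - s ^ 2 ≤ s / (1 + s) := by
    rw [le_div_iff₀ hs1]
    nlinarith
  linarith

end CWaux


section Main

open Real MeasureTheory CWaux

variable {β : ℝ}

/-- The integrand after the Gaussian (Hubbard–Stratonovich) transformation. -/
noncomputable def fN (β : ℝ) (n : ℕ) (x : ℝ) : ℝ :=
  Real.exp (-x ^ 2 / 2) * Real.cosh (Real.sqrt (β / ((n : ℝ) + 1)) * x) ^ (n + 1)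

lemma cosh_pow_eq (h0 : 0 ≤ β) (m : ℕ) (x : ℝ) :
    Real.cosh (Real.sqrt (β / (m : ℝ)) * x) ^ m
      = Real.exp ((m : ℝ) * Real.log (Real.cosh ((Real.sqrt β * |x|) / Real.sqrt (m : ℝ)))) := by
  have h1 : Real.cosh (Real.sqrt (β / (m : ℝ)) * x)
      = Real.cosh ((Real.sqrt β * |x|) / Real.sqrt (m : ℝ)) := by
    rw [← Real.cosh_abs, abs_mul, abs_of_nonneg (Real.sqrt_nonneg _),
      Real.sqrt_div h0, div_mul_eq_mul_div]
  rw [h1, ← Real.exp_log (Real.cosh_pos _), ← Real.exp_nat_mul, Real.log_exp]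

lemma fN_mono (h0 : 0 ≤ β) (x : ℝ) : Monotone fun n => fN β n x := by
  apply monotone_nat_of_le_succ
  intro n
  unfold fN
  apply mul_le_mul_of_nonneg_left _ (Real.exp_nonneg _)
  have e1 := cosh_pow_eq h0 (n + 1) x
  have e2 := cosh_pow_eq h0 (n + 2) x
  push_cast at e1 e2
  have hcast : ((n:ℝ) + 1) + 1 = (n:ℝ) + 2 := by ring
  push_cast
  rw [show n + 1 + 1 = n + 2 by omega, hcast, e1, e2]
  apply Real.exp_le_exp.mpr
  set c := Real.sqrt β * |x| with hc
  have hc0 : 0 ≤ c := by positivity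
  rcases eq_or_lt_of_le hc0 with h | h
  · simp [← h]
  · have := mono_step h (n + 1) (by omega)
    push_cast at this
    rw [hcast] at this
    exact this

lemma fN_le (h0 : 0 ≤ β) (n : ℕ) (x : ℝ) :
    fN β n x ≤ Real.exp (-((1 - β) / 2) * x ^ 2) := by
  unfold fN
  have e1 := cosh_pow_eq h0 (n + 1) x
  push_cast at e1
  rw [e1, ← Real.exp_add]
  apply Real.exp_le_exp.mpr
  set c := Real.sqrt β * |x| with hc
  have hc2 : c ^ 2 = β * x ^ 2 := by
    rw [hc, mul_pow, Real.sq_sqrt h0, sq_abs]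
  have hm : (0:ℝ) < (n : ℝ) + 1 := by positivity
  have ht2 : (c / Real.sqrt ((n:ℝ) + 1)) ^ 2 = c ^ 2 / ((n:ℝ) + 1) := by
    rw [div_pow, Real.sq_sqrt hm.le]
  have hlog := log_cosh_le (c / Real.sqrt ((n:ℝ) + 1))
  rw [ht2] at hlog
  have h2 : ((n:ℝ) + 1) * Real.log (Real.cosh (c / Real.sqrt ((n:ℝ) + 1)))
      ≤ c ^ 2 / 2 := by
    have := mul_le_mul_of_nonneg_left hlog hm.le
    calc ((n:ℝ) + 1) * Real.log (Real.cosh (c / Real.sqrt ((n:ℝ) + 1)))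
        ≤ ((n:ℝ) + 1) * (c ^ 2 / ((n:ℝ) + 1) / 2) := this
      _ = c ^ 2 / 2 := by field_simp
  nlinarith [hc2]

lemma fN_nonneg (n : ℕ) (x : ℝ) : 0 ≤ fN β n x := by
  unfold fN
  positivity

lemma fN_continuous (n : ℕ) : Continuous (fN β n) := by
  unfold fN
  fun_prop

lemma fN_integrable (h0 : 0 ≤ β) (h1 : β < 1) (n : ℕ) : Integrable (fN β n) := by
  apply MeasureTheory.Integrable.mono'
    (integrable_exp_neg_mul_sq (show (0:ℝ) < (1 - β) / 2 by linarith))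
    (fN_continuous n).aestronglyMeasurable
  filter_upwards with x
  rw [Real.norm_eq_abs, abs_of_nonneg (fN_nonneg n x)]
  exact fN_le h0 n x

lemma fN_lower (n : ℕ) (x : ℝ) :
    Real.exp (-(1/2 : ℝ) * x ^ 2) ≤ fN β n x := by
  unfold fN
  have h1 : Real.exp (-(1/2 : ℝ) * x ^ 2) = Real.exp (-x ^ 2 / 2) * 1 := by
    rw [mul_one]; congr 1; ring
  rw [h1]
  apply mul_le_mul_of_nonneg_left _ (Real.exp_nonneg _)
  exact one_le_pow₀ (Real.one_le_cosh _)

lemma fN_tendsto (h0 : 0 ≤ β) (x : ℝ) :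
    Tendsto (fun n => fN β n x) atTop (𝓝 (Real.exp (-((1 - β) / 2) * x ^ 2))) := by
  set c := Real.sqrt β * |x| with hc
  have hc0 : 0 ≤ c := by positivity
  have hc2 : c ^ 2 = β * x ^ 2 := by
    rw [hc, mul_pow, Real.sq_sqrt h0, sq_abs]
  set a : ℕ → ℝ := fun n => ((n:ℝ) + 1) * Real.log (Real.cosh (c / Real.sqrt ((n:ℝ) + 1)))
    with ha
  have hbound : ∀ n : ℕ, c ^ 2 / 2 - c ^ 4 / 4 * (1 / ((n:ℝ) + 1)) ≤ a n ∧ a n ≤ c ^ 2 / 2 := by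
    intro n
    have hm : (0:ℝ) < (n : ℝ) + 1 := by positivity
    have ht2 : (c / Real.sqrt ((n:ℝ) + 1)) ^ 2 = c ^ 2 / ((n:ℝ) + 1) := by
      rw [div_pow, Real.sq_sqrt hm.le]
    constructor
    · have hlog := le_log_cosh (c / Real.sqrt ((n:ℝ) + 1))
      rw [ht2] at hlog
      have := mul_le_mul_of_nonneg_left hlog hm.le
      have heq : ((n:ℝ) + 1) * (c ^ 2 / ((n:ℝ) + 1) / 2 - (c ^ 2 / ((n:ℝ) + 1) / 2) ^ 2)
          = c ^ 2 / 2 - c ^ 4 / 4 * (1 / ((n:ℝ) + 1)) := by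
        field_simp
        ring
      rw [heq] at this
      exact this
    · have hlog := log_cosh_le (c / Real.sqrt ((n:ℝ) + 1))
      rw [ht2] at hlog
      have := mul_le_mul_of_nonneg_left hlog hm.le
      have heq : ((n:ℝ) + 1) * (c ^ 2 / ((n:ℝ) + 1) / 2) = c ^ 2 / 2 := by
        field_simp
      rw [heq] at this
      exact this
  have hL : Tendsto (fun n : ℕ => c ^ 2 / 2 - c ^ 4 / 4 * (1 / ((n:ℝ) + 1))) atTop
      (𝓝 (c ^ 2 / 2)) := by
    have h2 : Tendsto (fun n : ℕ => c ^ 4 / 4 * (1 / ((n:ℝ) + 1))) atTop (𝓝 0) := by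
      have := tendsto_one_div_add_atTop_nhds_zero_nat (𝕜 := ℝ)
      simpa using this.const_mul (c ^ 4 / 4)
    simpa using tendsto_const_nhds.sub h2
  have hA : Tendsto a atTop (𝓝 (c ^ 2 / 2)) :=
    tendsto_of_tendsto_of_tendsto_of_le_of_le hL tendsto_const_nhds
      (fun n => (hbound n).1) (fun n => (hbound n).2)
  have hfn : ∀ n, fN β n x = Real.exp (-x ^ 2 / 2) * Real.exp (a n) := by
    intro n
    unfold fN
    congr 1
    have e1 := cosh_pow_eq h0 (n + 1) x
    push_cast at e1
    rw [e1]
  simp_rw [hfn]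
  have : Real.exp (-((1 - β) / 2) * x ^ 2)
      = Real.exp (-x ^ 2 / 2) * Real.exp (c ^ 2 / 2) := by
    rw [← Real.exp_add]
    congr 1
    rw [hc2]; ring
  rw [this]
  exact (Real.continuous_exp.tendsto _).comp hA |>.const_mul _

set_option maxHeartbeats 1000000 in
lemma cwG_formula (h0 : 0 ≤ β) (h1 : β < 1) (n : ℕ) :
    cwG (n + 1) β = -β / 2 - Real.log (Real.sqrt (2 * π)) + Real.log (∫ x, fN β n x) := by
  have hN : 1 ≤ n + 1 := by omega
  have hz1 := cwZ_eq β hN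
  have hz2 := sum_exp_sq β h0 hN
  have hsum : ∑ σ : Fin (n+1) → Bool,
      Real.exp (β / (2 * ((n:ℝ)+1)) * (∑ i, spin (σ i)) ^ 2 - β / 2)
      = (∑ σ : Fin (n+1) → Bool,
          Real.exp (β / (2 * ((n:ℝ)+1)) * (∑ i, spin (σ i)) ^ 2)) * Real.exp (-β / 2) := by
    rw [Finset.sum_mul]
    congr 1; ext σ
    rw [← Real.exp_add]
    congr 1; ring
  have hint : (∫ x : ℝ, Real.exp (-x ^ 2 / 2) *
        (2 * Real.cosh (Real.sqrt (β / ((n:ℝ)+1)) * x)) ^ (n+1))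
      = 2 ^ (n+1) * ∫ x, fN β n x := by
    rw [← integral_const_mul]
    congr 1; ext x
    unfold fN
    rw [mul_pow]
    ring
  have hFpos : 0 < ∫ x, fN β n x := by
    have hle : (∫ x : ℝ, Real.exp (-(1/2 : ℝ) * x ^ 2)) ≤ ∫ x, fN β n x :=
      integral_mono (integrable_exp_neg_mul_sq (by norm_num)) (fN_integrable h0 h1 n)
        (fun x => fN_lower n x)
    have : (0:ℝ) < ∫ x : ℝ, Real.exp (-(1/2 : ℝ) * x ^ 2) := by
      rw [integral_gaussian]
      apply Real.sqrt_pos.mpr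
      positivity
    linarith
  have hcast : ((n + 1 : ℕ) : ℝ) = (n : ℝ) + 1 := by push_cast; ring
  have hZ : cwZ (n + 1) β
      = Real.exp (-β / 2) * ((Real.sqrt (2 * π))⁻¹ * (2 ^ (n+1) * ∫ x, fN β n x)) := by
    rw [hz1]
    rw [hcast] at hz2 ⊢
    rw [hsum, hz2, hint]
    ring
  unfold cwG
  rw [hZ]
  have hsq2pi : (0:ℝ) < Real.sqrt (2 * π) := Real.sqrt_pos.mpr (by positivity)
  have hinv : (0:ℝ) < (Real.sqrt (2 * π))⁻¹ := by positivity
  have h2pow : (0:ℝ) < (2:ℝ) ^ (n + 1) := by positivity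
  rw [Real.log_mul (Real.exp_ne_zero _)
      (ne_of_gt (mul_pos hinv (mul_pos h2pow hFpos))),
    Real.log_mul (ne_of_gt hinv) (ne_of_gt (mul_pos h2pow hFpos)),
    Real.log_mul (ne_of_gt h2pow) (ne_of_gt hFpos),
    Real.log_exp, Real.log_inv, Real.log_pow]
  push_cast
  ring

end Main

theorem curie_weiss_high_temperature_free_energy
    (β : ℝ) (h0 : 0 ≤ β) (h1 : β < 1) :
    (∀ N, 1 ≤ N → cwG N β ≤ cwG (N + 1) β) ∧
    Tendsto (fun N => cwG N β) atTop
      (𝓝 (-β / 2 - Real.log (Real.sqrt (1 - β)))) := by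
  have hFmono : Monotone fun n => ∫ x, fN β n x := by
    intro a b hab
    exact MeasureTheory.integral_mono (fN_integrable h0 h1 a) (fN_integrable h0 h1 b)
      (fun x => fN_mono h0 x hab)
  have hFtend : Tendsto (fun n => ∫ x, fN β n x) atTop
      (𝓝 (Real.sqrt (2 * Real.pi / (1 - β)))) := by
    have h2 := MeasureTheory.integral_tendsto_of_tendsto_of_monotone
      (f := fun n => fN β n) (F := fun x => Real.exp (-((1 - β) / 2) * x ^ 2))
      (fN_integrable h0 h1)
      (integrable_exp_neg_mul_sq (show (0:ℝ) < (1 - β) / 2 by linarith))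
      (Filter.Eventually.of_forall fun x => fN_mono h0 x)
      (Filter.Eventually.of_forall fun x => fN_tendsto h0 x)
    have h3 : (∫ x : ℝ, Real.exp (-((1 - β) / 2) * x ^ 2))
        = Real.sqrt (2 * Real.pi / (1 - β)) := by
      rw [integral_gaussian]
      congr 1
      field_simp
    rwa [h3] at h2
  have hFpos : ∀ n, (0:ℝ) < ∫ x, fN β n x := by
    intro n
    have hle : (∫ x : ℝ, Real.exp (-(1/2 : ℝ) * x ^ 2)) ≤ ∫ x, fN β n x :=
      MeasureTheory.integral_mono (integrable_exp_neg_mul_sq (by norm_num))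
        (fN_integrable h0 h1 n) (fun x => fN_lower n x)
    have : (0:ℝ) < ∫ x : ℝ, Real.exp (-(1/2 : ℝ) * x ^ 2) := by
      rw [integral_gaussian]
      apply Real.sqrt_pos.mpr
      positivity
    linarith
  constructor
  · intro N hN
    obtain ⟨n, rfl⟩ : ∃ n, N = n + 1 := ⟨N - 1, (Nat.succ_pred_eq_of_pos hN).symm⟩
    rw [cwG_formula h0 h1 n, cwG_formula h0 h1 (n + 1)]
    have := Real.log_le_log (hFpos n) (hFmono (Nat.le_succ n))
    linarith
  · rw [← Filter.tendsto_add_atTop_iff_nat 1]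
    have heq : (fun n => cwG (n + 1) β)
        = fun n => -β / 2 - Real.log (Real.sqrt (2 * Real.pi))
            + Real.log (∫ x, fN β n x) :=
      funext (cwG_formula h0 h1)
    rw [heq]
    have hβ1 : (0:ℝ) < 1 - β := by linarith
    have htarget : -β / 2 - Real.log (Real.sqrt (1 - β))
        = -β / 2 - Real.log (Real.sqrt (2 * Real.pi))
            + Real.log (Real.sqrt (2 * Real.pi / (1 - β))) := by
      rw [Real.sqrt_div (by positivity) (1 - β),
        Real.log_div (by positivity) (by positivity)]
      ring
    rw [htarget]
    exact tendsto_const_nhds.add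
      (hFtend.log (ne_of_gt (Real.sqrt_pos.mpr (by positivity))))
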